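/- Lemma 2.6 (flatness of the Dulac map at the node). Assume ε ≥ 0 and that P_ε satisfies (H1) and (H2), and let 𝒟(s;ε,a,λ) := D(s+ϑ_ε;ε,a,λ) = exp(λ∫₁^{s+ϑ_ε} V_a(t)/P_ε(t) dt). Then for each ℓ ∈ ℤ⁺, each λ₀ > 0, every compact K_a ⊂ A, and each y > 0 small enough, there exists ε₀ > 0 such that both (y^ℓ·𝒟(s))/(s^ℓ·𝒟(y)) and s^{−ℓ}·𝒟(s) tend to zero as s → 0⁺, uniformly on [0,ε₀] × K_a × [λ₀,∞). -/

import Mathlib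

open Set Filter Topology Real intervalIntegral

noncomputable section

/-- `𝒟(s;ε,a,λ) = D(s+ϑ_ε;ε,a,λ) = exp(λ∫₁^{s+ϑ_ε} V_a(t)/P_ε(t) dt)`, the Dulac map of
the saddle `(ϑ_ε,0)` of `P_ε(x)∂_x − λV_a(x)y∂_y`, written in the variable `s = x − ϑ_ε`;
here `ϑ : ℝ → ℝ` is the root function `ϑ_ε = σ(ε^{1/ρ})`. -/
def Dmap {E : Type*} (P : ℝ → ℝ → ℝ) (V : E → ℝ → ℝ) (ϑ : ℝ → ℝ)
    (s ε : ℝ) (a : E) (lam : ℝ) : ℝ :=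
  Real.exp (lam * ∫ t in (1 : ℝ)..(s + ϑ ε), V a t / P t ε)


private lemma dulac_log_integral_shift (c s y : ℝ) (hs : 0 < s) (hsy : s ≤ y) :
    ∫ t in (s+c)..(y+c), 1/(t - c) = Real.log y - Real.log s := by
  have h := intervalIntegral.integral_comp_sub_right (a := s + c) (b := y + c)
      (fun u => 1/u) c
  simp only [add_sub_cancel_right] at h
  rw [h, integral_one_div (by rw [Set.uIcc_of_le hsy]; rintro ⟨h1,h2⟩; linarith),
    Real.log_div (by linarith) (by positivity)]

private lemma dulac_extract_Icc {pr : ℝ → Prop} (h : ∀ᶠ ε in 𝓝[≥] (0:ℝ), pr ε) :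
    ∃ ε₀ > (0:ℝ), ∀ ε ∈ Icc (0:ℝ) ε₀, pr ε := by
  rw [Filter.Eventually, mem_nhdsGE_iff_exists_Icc_subset] at h
  obtain ⟨u, hu, hsub⟩ := h
  exact ⟨u, hu, fun ε hε => hsub hε⟩

set_option maxHeartbeats 2000000 in
/-- **Lemma 2.6 of the paper (flatness of the Dulac map at the node).**  Under hypotheses
(H1) and (H2) on `P_ε`, for each `ℓ ∈ ℤ⁺`, `λ₀ > 0`, compact `K_a ⊆ A`, and each
`y > 0` small enough, there exists `ε₀ > 0` such that both `y^ℓ𝒟(s)/(s^ℓ𝒟(y))` and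
`s^{−ℓ}𝒟(s)` tend to zero as `s → 0⁺`, uniformly on `[0,ε₀] × K_a × [λ₀,∞)`. -/
theorem dulac_map_flat {E : Type*} [NormedAddCommGroup E] [NormedSpace ℝ E]
    (μ ρ ν : ℕ) (hμ : 0 < μ) (hρ : 0 < ρ) (hν : 0 < ν)
    (A : Set E) (hA : IsOpen A)
    (P : ℝ → ℝ → ℝ) (p : ℕ → ℝ → ℝ)
    (hpa : ∀ i, AnalyticAt ℝ (p i) 0)
    (hPpoly : ∀ x ε : ℝ, P x ε = ∑ i ∈ Finset.range (μ + 2), p i ε * x ^ i)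
    (hP0 : ∀ x : ℝ, P x 0 = x ^ (μ + 1))
    (σ : ℝ → ℝ) (hσa : AnalyticAt ℝ σ 0) (hσ0 : σ 0 = 0)
    (hroot : ∀ᶠ ε in 𝓝[≥] (0 : ℝ),
      P (σ (ε ^ (1 / (ρ : ℝ)))) ε = 0 ∧
      ∀ x ∈ Icc (-1 : ℝ) 1, σ (ε ^ (1 / (ρ : ℝ))) < x → P x ε ≠ 0)
    (Q : ℝ → ℝ → ℝ)
    (hQdef : ∀ s e : ℝ, s * Q s e = P (s + σ e) (e ^ ρ))
    (hQa : AnalyticAt ℝ (fun z : ℝ × ℝ => Q z.1 z.2) (0, 0))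
    (hQ0 : ∀ s : ℝ, Q s 0 = s ^ μ)
    (q : ℕ → ℕ → ℝ)
    (hqsum : ∀ᶠ z : ℝ × ℝ in 𝓝 (0, 0),
      HasSum (fun ij : ℕ × ℕ => q ij.1 ij.2 * z.1 ^ ij.1 * z.2 ^ ij.2) (Q z.1 z.2))
    (hχ : 0 < q 0 ν) (hνmin : ∀ j < ν, q 0 j = 0)
    (hH1 : ∀ (i j : ℕ), q i j ≠ 0 → 1 ≤ (i : ℝ) / μ + (j : ℝ) / ν)
    (hH2 : ∀ θ ∈ Icc (0 : ℝ) (π / 2),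
      0 < ∑ i ∈ Finset.range (μ + 1), ∑ j ∈ Finset.range (ν + 1),
        (if (i : ℝ) / μ + (j : ℝ) / ν = 1 then q i j * sin θ ^ i * cos θ ^ j else 0))
    (V : E → ℝ → ℝ)
    (hVa : ∀ a ∈ A, ∀ x ∈ Icc (-1 : ℝ) 1,
      AnalyticAt ℝ (fun z : E × ℝ => V z.1 z.2) (a, x))
    (hV0 : ∀ a ∈ A, V a 0 = 1)
    (hVpos : ∀ a ∈ A, ∀ x ∈ Icc (-1 : ℝ) 1, 0 < V a x) :
    ∀ ℓ : ℕ, ∀ lam₀ : ℝ, 0 < lam₀ → ∀ Ka : Set E, IsCompact Ka → Ka ⊆ A →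
      ∃ y₁ > (0 : ℝ), ∀ y : ℝ, 0 < y → y < y₁ →
        ∃ ε₀ > (0 : ℝ), ∀ δ > (0 : ℝ), ∀ᶠ s in 𝓝[>] (0 : ℝ),
          ∀ ε ∈ Icc (0 : ℝ) ε₀, ∀ a ∈ Ka, ∀ lam : ℝ, lam₀ ≤ lam →
            |y ^ ℓ * Dmap P V (fun ε => σ (ε ^ (1 / (ρ : ℝ)))) s ε a lam /
              (s ^ ℓ * Dmap P V (fun ε => σ (ε ^ (1 / (ρ : ℝ)))) y ε a lam)| < δ ∧
            |Dmap P V (fun ε => σ (ε ^ (1 / (ρ : ℝ)))) s ε a lam / s ^ ℓ| < δ := by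
  intro ℓ lam₀ hlam₀ Ka hKa hKaA
  rcases Ka.eq_empty_or_nonempty with hKe | hne
  · refine ⟨1, one_pos, fun y hy hyy => ⟨1, one_pos, fun δ hδ => ?_⟩⟩
    filter_upwards with s
    intro ε hε a ha
    exact absurd ha (by simp [hKe])
  -- minimum of V on Ka × [-1,1]
  have hVcont : ContinuousOn (fun z : E × ℝ => V z.1 z.2) (Ka ×ˢ Icc (-1:ℝ) 1) :=
    fun z hz => ((hVa z.1 (hKaA hz.1) z.2 hz.2).continuousAt).continuousWithinAt
  obtain ⟨z₀, hz₀, hmin⟩ := (hKa.prod isCompact_Icc).exists_isMinOn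
    (hne.prod (nonempty_Icc.2 (by norm_num))) hVcont
  set c := V z₀.1 z₀.2 with hcdef
  have hc : 0 < c := hVpos z₀.1 (hKaA hz₀.1) z₀.2 hz₀.2
  have hcV : ∀ a ∈ Ka, ∀ t ∈ Icc (-1:ℝ) 1, c ≤ V a t := fun a ha t ht =>
    hmin (Set.mk_mem_prod ha ht)
  set M := lam₀ * c / (ℓ + 1) with hMdef
  have hM0 : 0 < M := by positivity
  -- continuity of Q at (0,0)
  have hQ00 : Q 0 0 = 0 := by simpa [zero_pow hμ.ne'] using hQ0 0
  have h1 : ∀ᶠ z : ℝ × ℝ in 𝓝 ((0:ℝ), (0:ℝ)), |Q z.1 z.2| < M := by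
    have ht : Tendsto (fun z : ℝ × ℝ => Q z.1 z.2) (𝓝 (0, 0)) (𝓝 0) := by
      simpa [ContinuousAt, hQ00] using hQa.continuousAt
    exact (Metric.tendsto_nhds.mp ht M hM0).mono (fun z hz => by
      simpa [Real.dist_eq] using hz)
  obtain ⟨r, hr0, hball⟩ := Metric.eventually_nhds_iff.mp h1
  set η := min (r/2) (8⁻¹ : ℝ) with hηdef
  have hη0 : 0 < η := lt_min (by linarith) (by norm_num)
  have hη8 : η ≤ 8⁻¹ := min_le_right _ _
  have hQb : ∀ u e : ℝ, |u| ≤ η → |e| ≤ η → |Q u e| < M := by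
    intro u e hu he
    have h2 : η < r := lt_of_le_of_lt (min_le_left _ _) (by linarith)
    have hd : dist ((u, e) : ℝ × ℝ) ((0:ℝ), (0:ℝ)) < r := by
      rw [Prod.dist_eq]
      simp only [Real.dist_eq, sub_zero]
      exact max_lt (lt_of_le_of_lt hu h2) (lt_of_le_of_lt he h2)
    exact hball hd
  -- smallness of ϑ near ε = 0
  have hϑsmall : ∀ᶠ ε in 𝓝 (0:ℝ), |σ (ε ^ (1 / (ρ : ℝ)))| < η := by
    have h0 : (0:ℝ) ^ (1/(ρ:ℝ)) = 0 := Real.zero_rpow (by positivity)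
    have hrt : Tendsto (fun ε : ℝ => ε ^ (1/(ρ:ℝ))) (𝓝 0) (𝓝 0) := by
      have := Real.continuousAt_rpow_const 0 (1/(ρ:ℝ)) (Or.inr (by positivity))
      have h0' : (0:ℝ) ^ ((ρ:ℝ))⁻¹ = 0 := Real.zero_rpow (by positivity)
      simpa [ContinuousAt, h0, h0'] using this
    have hσt : Tendsto σ (𝓝 0) (𝓝 0) := by
      simpa [ContinuousAt, hσ0] using hσa.continuousAt
    have ht : Tendsto (fun ε : ℝ => σ (ε ^ (1/(ρ:ℝ)))) (𝓝 0) (𝓝 0) := by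
      simpa [Function.comp_def] using hσt.comp hrt
    exact (Metric.tendsto_nhds.mp ht η hη0).mono (fun ε hε => by
      simpa [Real.dist_eq] using hε)
  -- positivity of P(1,ε) near ε = 0
  have hP1pos : ∀ᶠ ε in 𝓝 (0:ℝ), 0 < P 1 ε := by
    have heq : (fun ε => P 1 ε) = fun ε => ∑ i ∈ Finset.range (μ+2), p i ε * 1 ^ i :=
      funext fun ε => hPpoly 1 ε
    have hc1 : ContinuousAt (fun ε => P 1 ε) 0 := by
      rw [heq]
      exact tendsto_finset_sum _ fun i _ => ((hpa i).continuousAt.mul tendsto_const_nhds)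
    have h10 : P 1 0 = 1 := by rw [hP0 1, one_pow]
    have := hc1
    rw [ContinuousAt, h10] at this
    exact this.eventually (eventually_gt_nhds one_pos)
  obtain ⟨ε₁, hε₁, hKey⟩ := dulac_extract_Icc
    (hroot.and ((hϑsmall.and hP1pos).filter_mono nhdsWithin_le_nhds))
  refine ⟨η, hη0, fun y hy0 hyη => ?_⟩
  set ε₀ := min ε₁ (η ^ ρ) with hε₀def
  have hε₀pos : 0 < ε₀ := lt_min hε₁ (by positivity)
  refine ⟨ε₀, hε₀pos, fun δ hδ => ?_⟩
  set Sb := min (y/2) (min (δ*y) (δ*y^(ℓ+1))) with hSbdef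
  have hSb : 0 < Sb := lt_min (by linarith) (lt_min (by positivity) (by positivity))
  filter_upwards [Ioo_mem_nhdsGT_of_mem (⟨le_refl 0, hSb⟩ : (0:ℝ) ∈ Ico 0 Sb)] with s hs
  intro ε hε a ha lam hlam
  obtain ⟨⟨hrootε, hnoroot⟩, hϑη, hP1⟩ := hKey ε ⟨hε.1, hε.2.trans (min_le_left _ _)⟩
  set θ := σ (ε ^ (1 / (ρ : ℝ))) with hθdef
  set ϵ := ε ^ (1 / (ρ : ℝ)) with hϵdef
  have hϵ0 : 0 ≤ ϵ := Real.rpow_nonneg hε.1 _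
  have hρR : (0:ℝ) < (ρ:ℝ) := by exact_mod_cast hρ
  have hϵη : ϵ ≤ η := by
    have h1 : ε ≤ η ^ ρ := hε.2.trans (min_le_right _ _)
    have h2 : ϵ ≤ (η ^ ρ) ^ (1/(ρ:ℝ)) := Real.rpow_le_rpow hε.1 h1 (by positivity)
    have h3 : ((η:ℝ) ^ ρ) ^ (1/(ρ:ℝ)) = η := by
      rw [← Real.rpow_natCast η ρ, ← Real.rpow_mul hη0.le, mul_one_div,
        div_self hρR.ne', Real.rpow_one]
    rwa [h3] at h2
  have hϵρ : ϵ ^ ρ = ε := by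
    rw [hϵdef, ← Real.rpow_natCast _ ρ, ← Real.rpow_mul hε.1, one_div,
      inv_mul_cancel₀ hρR.ne', Real.rpow_one]
  have hθη : |θ| < η := hϑη
  have hθlt := abs_lt.mp hθη
  have hη8' : η ≤ (1:ℝ)/8 := by rw [one_div]; exact hη8
  have hPexp : ∀ u : ℝ, P (u + θ) ε = u * Q u ϵ := by
    intro u
    rw [← hϵρ, ← hQdef u ϵ]
  have hcontP : Continuous fun t => P t ε := by
    have heq : (fun t => P t ε) = fun t => ∑ i ∈ Finset.range (μ+2), p i ε * t ^ i :=
      funext fun t => hPpoly t ε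
    rw [heq]
    exact continuous_finset_sum _ fun i _ => continuous_const.mul (continuous_pow i)
  -- positivity of P on (θ, 1]
  have hPpos : ∀ x : ℝ, θ < x → x ≤ 1 → 0 < P x ε := by
    intro x hx1 hx2
    by_contra hle
    push_neg at hle
    rcases eq_or_lt_of_le hle with heq | hlt
    · exact hnoroot x ⟨by linarith, hx2⟩ hx1 heq
    · obtain ⟨z, hz, hz0⟩ := intermediate_value_Icc hx2 hcontP.continuousOn
        (⟨hlt.le, hP1.le⟩ : (0:ℝ) ∈ Icc (P x ε) (P 1 ε))
      exact hnoroot z ⟨by linarith [hz.1], hz.2⟩ (lt_of_lt_of_le hx1 hz.1) hz0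
  -- bounds for Q near the origin
  have hQub : ∀ u : ℝ, 0 < u → u ≤ η → 0 < Q u ϵ ∧ Q u ϵ < M := by
    intro u hu huη
    have hP' : 0 < P (u + θ) ε := hPpos (u + θ) (by linarith) (by linarith)
    rw [hPexp u] at hP'
    have hQp : 0 < Q u ϵ := by
      rcases mul_pos_iff.mp hP' with h | h
      · exact h.2
      · exact absurd h.1 (lt_asymm hu)
    have hb := hQb u ϵ (by rw [abs_of_pos hu]; exact huη)
      (by rw [abs_of_nonneg hϵ0]; exact hϵη)
    exact ⟨hQp, lt_of_le_of_lt (le_abs_self _) hb⟩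
  have hs0 : 0 < s := hs.1
  have hsy : s < y := lt_of_lt_of_le hs.2 ((min_le_left _ _).trans (by linarith))
  have hsδy : s < δ * y := lt_of_lt_of_le hs.2 ((min_le_right _ _).trans (min_le_left _ _))
  have hsδy2 : s < δ * y ^ (ℓ+1) :=
    lt_of_lt_of_le hs.2 ((min_le_right _ _).trans (min_le_right _ _))
  -- integrand continuity and integrability
  have hlo1 : s + θ ≤ 1 := by linarith
  have hmid1 : y + θ ≤ 1 := by linarith
  have hlomid : s + θ ≤ y + θ := by linarith
  have hgcont : ContinuousOn (fun t => V a t / P t ε) (Icc (s + θ) 1) := by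
    intro t ht
    have ht1 : t ∈ Icc (-1:ℝ) 1 := ⟨by linarith [ht.1], ht.2⟩
    have hV : ContinuousAt (fun t : ℝ => V a t) t :=
      (hVa a (hKaA ha) t ht1).continuousAt.comp
        ((continuous_const.prodMk continuous_id).continuousAt)
    exact (hV.continuousWithinAt).div (hcontP.continuousAt.continuousWithinAt)
      (ne_of_gt (hPpos t (by linarith [ht.1]) ht.2))
  have hI1 : IntervalIntegrable (fun t => V a t / P t ε) MeasureTheory.volume
      (s + θ) (y + θ) :=
    (hgcont.mono (Icc_subset_Icc le_rfl hmid1)).intervalIntegrable_of_Icc hlomid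
  have hI2 : IntervalIntegrable (fun t => V a t / P t ε) MeasureTheory.volume
      (y + θ) 1 :=
    (hgcont.mono (Icc_subset_Icc (by linarith) le_rfl)).intervalIntegrable_of_Icc hmid1
  -- lower bound for the middle integral
  set L := Real.log y - Real.log s with hLdef
  have hL0 : 0 < L := sub_pos.2 (Real.log_lt_log hs0 hsy)
  have hJ : (c/M) * L ≤ ∫ t in (s+θ)..(y+θ), V a t / P t ε := by
    have hlowcont : ContinuousOn (fun t => (c/M) * (1/(t - θ))) (Icc (s+θ) (y+θ)) := by
      apply ContinuousOn.mul continuousOn_const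
      apply ContinuousOn.div continuousOn_const
        ((continuous_id.sub continuous_const).continuousOn)
      intro t ht
      have : 0 < t - θ := by linarith [ht.1]
      exact ne_of_gt this
    have hlowint : IntervalIntegrable (fun t => (c/M) * (1/(t - θ)))
        MeasureTheory.volume (s+θ) (y+θ) := hlowcont.intervalIntegrable_of_Icc hlomid
    have hmono := intervalIntegral.integral_mono_on hlomid hlowint hI1 ?_
    · have hcomp : ∫ t in (s+θ)..(y+θ), (c/M) * (1/(t - θ)) = (c/M) * L := by
        rw [intervalIntegral.integral_const_mul, dulac_log_integral_shift θ s y hs0 hsy.le]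
      exact le_of_eq_of_le hcomp.symm hmono
    · intro t ht
      have hu0 : 0 < t - θ := by linarith [ht.1]
      have huη : t - θ ≤ η := by linarith [ht.2]
      have ht1 : t ∈ Icc (-1:ℝ) 1 := ⟨by linarith [ht.1], by linarith [ht.2]⟩
      have hVt := hcV a ha t ht1
      obtain ⟨hQp, hQM⟩ := hQub (t - θ) hu0 huη
      have hPt : P t ε = (t - θ) * Q (t - θ) ϵ := by
        have := hPexp (t - θ)
        rwa [sub_add_cancel] at this
      have hPpos' : 0 < P t ε := by rw [hPt]; positivity
      have hPle : P t ε ≤ (t - θ) * M := by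
        rw [hPt]; exact mul_le_mul_of_nonneg_left hQM.le hu0.le
      calc (c/M) * (1/(t - θ)) = c / (M * (t - θ)) := by
            rw [mul_one_div, div_div]
        _ ≤ V a t / P t ε :=
            div_le_div₀ (hc.le.trans hVt) hVt hPpos' (by rw [mul_comm]; exact hPle)
  have hJ0 : 0 ≤ ∫ t in (s+θ)..(y+θ), V a t / P t ε :=
    le_trans (by positivity) hJ
  -- tail integral is nonnegative
  have hT0 : 0 ≤ ∫ t in (y+θ)..1, V a t / P t ε := by
    apply intervalIntegral.integral_nonneg hmid1
    intro t ht
    have ht1 : t ∈ Icc (-1:ℝ) 1 := ⟨by linarith [ht.1], ht.2⟩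
    exact div_nonneg (hVpos a (hKaA ha) t ht1).le (hPpos t (by linarith [ht.1]) ht.2).le
  -- decompose the integrals
  have hIs : ∫ t in (1:ℝ)..(s+θ), V a t / P t ε =
      -((∫ t in (s+θ)..(y+θ), V a t / P t ε) + ∫ t in (y+θ)..1, V a t / P t ε) := by
    rw [intervalIntegral.integral_symm, intervalIntegral.integral_add_adjacent_intervals hI1 hI2]
  have hIy : ∫ t in (1:ℝ)..(y+θ), V a t / P t ε =
      -(∫ t in (y+θ)..1, V a t / P t ε) := by
    rw [intervalIntegral.integral_symm]
  set J := ∫ t in (s+θ)..(y+θ), V a t / P t ε with hJdef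
  set T := ∫ t in (y+θ)..1, V a t / P t ε with hTdef
  clear_value J T
  clear_value L
  -- key exponent computation
  have hcM : c / M = (ℓ+1 : ℝ) / lam₀ := by
    rw [hMdef]; field_simp
  have hJL : (ℓ+1 : ℝ) / lam₀ * L ≤ J := by rw [← hcM]; exact hJ
  have hexpkey : lam * (-(J + T)) ≤ -((ℓ+1 : ℝ) * L) ∧
      lam * (-(J + T)) - lam * (-T) ≤ -((ℓ+1 : ℝ) * L) := by
    have h2 : lam₀ * ((ℓ+1 : ℝ)/lam₀ * L) = (ℓ+1 : ℝ) * L := by field_simp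
    have h3 : lam₀ * ((ℓ+1 : ℝ)/lam₀ * L) ≤ lam₀ * J :=
      mul_le_mul_of_nonneg_left hJL hlam₀.le
    have h4 : lam₀ * J ≤ lam * J := mul_le_mul_of_nonneg_right hlam hJ0
    have h5 : 0 ≤ lam * T := mul_nonneg (by linarith) hT0
    constructor
    · linarith only [h2, h3, h4, h5]
    · linarith only [h2, h3, h4]
  have hexpL : Real.exp (-((ℓ+1 : ℝ) * L)) = (s/y)^(ℓ+1) := by
    have h6 : -((ℓ+1 : ℝ) * L) = Real.log ((s/y)^(ℓ+1)) := by
      rw [Real.log_pow, Real.log_div hs0.ne' hy0.ne']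
      push_cast
      rw [hLdef]; ring
    rw [h6, Real.exp_log (by positivity)]
  -- unfold Dmap and conclude
  simp only [Dmap, ← hϵdef, ← hθdef, hIs, hIy]
  have hsy' : 0 < s / y := by positivity
  constructor
  · have hval : y ^ ℓ * Real.exp (lam * -(J + T)) / (s ^ ℓ * Real.exp (lam * -T)) =
        (y ^ ℓ / s ^ ℓ) * Real.exp (lam * -(J + T) - lam * -T) := by
      rw [Real.exp_sub, mul_div_mul_comm]
    rw [abs_of_pos (by positivity), hval]
    have hb1 : Real.exp (lam * -(J + T) - lam * -T) ≤ (s/y)^(ℓ+1) := by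
      rw [← hexpL]
      exact Real.exp_le_exp.2 hexpkey.2
    have hb2 : (y ^ ℓ / s ^ ℓ) * Real.exp (lam * -(J + T) - lam * -T) ≤
        (y ^ ℓ / s ^ ℓ) * (s/y)^(ℓ+1) :=
      mul_le_mul_of_nonneg_left hb1 (by positivity)
    have hb3 : (y ^ ℓ / s ^ ℓ) * (s/y)^(ℓ+1) = s / y := by
      rw [div_pow, pow_succ s, pow_succ y]
      field_simp
    have hb4 : s / y < δ := (div_lt_iff₀ hy0).2 (by linarith [hsδy])
    calc (y ^ ℓ / s ^ ℓ) * Real.exp (lam * -(J + T) - lam * -T)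
        ≤ (y ^ ℓ / s ^ ℓ) * (s/y)^(ℓ+1) := hb2
      _ = s / y := hb3
      _ < δ := hb4
  · rw [abs_of_pos (by positivity)]
    have hb1 : Real.exp (lam * -(J + T)) ≤ (s/y)^(ℓ+1) := by
      rw [← hexpL]
      exact Real.exp_le_exp.2 hexpkey.1
    have hb2 : Real.exp (lam * -(J + T)) / s ^ ℓ ≤ (s/y)^(ℓ+1) / s ^ ℓ :=
      (div_le_div_iff_of_pos_right (by positivity : (0:ℝ) < s ^ ℓ)).2 hb1
    have hb3 : (s/y)^(ℓ+1) / s ^ ℓ = s / y^(ℓ+1) := by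
      rw [div_pow, pow_succ s]
      field_simp
    have hb4 : s / y^(ℓ+1) < δ := (div_lt_iff₀ (by positivity)).2 (by linarith [hsδy2])
    calc Real.exp (lam * -(J + T)) / s ^ ℓ ≤ (s/y)^(ℓ+1) / s ^ ℓ := hb2
      _ = s / y^(ℓ+1) := hb3
      _ < δ := hb4


end
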